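/- Let A be an abelian group whose torsion subgroup is locally cyclic (e.g. A ≤ 𝕂ˣ for a field 𝕂), let G be a finite group with Hom(G,A) finite, and let N be a normal subgroup of G. Then O(G/N) = O(G)N/N, where O(H) := ⋂_{φ ∈ Hom(H,A)} ker φ for a finite group H. -/

import Mathlib

theorem stmt_8 {A : Type*} [CommGroup A] (G : Type*) [Group G] [Finite G]
    [Finite (G →* A)]
    (hA : ∀ B : Subgroup A, Finite ↥B → IsCyclic ↥B)
    (N : Subgroup G) [N.Normal] :
    (⨅ ψ : (G ⧸ N) →* A, ψ.ker) =
      Subgroup.map (QuotientGroup.mk' N) (⨅ φ : G →* A, φ.ker) := by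
  classical
  set D : Subgroup G := ⨅ φ : G →* A, φ.ker with hD
  haveI hDn : D.Normal := by
    constructor
    intro n hn g
    rw [Subgroup.mem_iInf] at hn ⊢
    intro φ
    have h1 := hn φ
    rw [MonoidHom.mem_ker] at h1 ⊢
    simp [h1]
  apply le_antisymm
  · -- hard direction
    intro q hq
    obtain ⟨x, rfl⟩ := QuotientGroup.mk'_surjective N q
    rw [Subgroup.mem_iInf] at hq
    have key : x ∈ D ⊔ N → (QuotientGroup.mk' N) x ∈ Subgroup.map (QuotientGroup.mk' N) D := by
      intro hx
      have : x ∈ Subgroup.comap (QuotientGroup.mk' N) (Subgroup.map (QuotientGroup.mk' N) D) := by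
        rw [Subgroup.comap_map_eq, QuotientGroup.ker_mk']
        exact hx
      exact this
    apply key
    set K : Subgroup G := D ⊔ N with hK
    by_contra hxK
    -- commutators lie in K
    open commutatorElement in
    have hcommK : ∀ a b : G, ⁅a, b⁆ ∈ K := by
      intro a b
      apply Subgroup.mem_sup_left
      rw [Subgroup.mem_iInf]
      intro φ
      rw [MonoidHom.mem_ker, map_commutatorElement]
      exact commutatorElement_eq_one_iff_commute.2 (mul_comm _ _)
    letI : CommGroup (G ⧸ K) :=
      { (inferInstance : Group (G ⧸ K)) with
        mul_comm := by
          intro a b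
          obtain ⟨a, rfl⟩ := QuotientGroup.mk_surjective a
          obtain ⟨b, rfl⟩ := QuotientGroup.mk_surjective b
          rw [← QuotientGroup.mk_mul, ← QuotientGroup.mk_mul]
          apply (QuotientGroup.eq ..).2
          open commutatorElement in
          have : (a * b)⁻¹ * (b * a) = ⁅b⁻¹, a⁻¹⁆ := by group
          rw [this]
          exact hcommK _ _ }
    -- the subgroup B of A generated by all ranges
    haveI := Fintype.ofFinite (G →* A)
    haveI : ∀ φ : G →* A, Finite ↥φ.range := fun φ => (Set.finite_range φ).to_subtype
    have hpair : Pairwise fun (i j : G →* A) =>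
        ∀ (x : ↥i.range) (y : ↥j.range), Commute (i.range.subtype x) (j.range.subtype y) :=
      fun i j _ => fun x y => mul_comm _ _
    set Θ := MonoidHom.noncommPiCoprod (fun φ : G →* A => φ.range.subtype) hpair with hΘ
    set B : Subgroup A := Θ.range with hBdef
    haveI : Finite ↥B := (Set.finite_range Θ).to_subtype
    have hB : ∀ (φ : G →* A) (g : G), φ g ∈ B := by
      intro φ g
      have hsup : B = ⨆ φ : G →* A, (φ : G →* A).range := by
        rw [hBdef, hΘ, MonoidHom.noncommPiCoprod_range]
        simp [Subgroup.range_subtype]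
      rw [hsup]
      exact Subgroup.mem_iSup_of_mem φ ⟨g, rfl⟩
    haveI : IsCyclic ↥B := hA B inferInstance
    set m := Nat.card ↥B with hm
    have hm0 : 0 < m := Nat.card_pos
    -- exponent of G⧸K divides m
    have hexp : Monoid.exponent (G ⧸ K) ∣ m := by
      apply Monoid.exponent_dvd_of_forall_pow_eq_one
      intro h
      obtain ⟨g, rfl⟩ := QuotientGroup.mk_surjective h
      rw [← QuotientGroup.mk_pow, QuotientGroup.eq_one_iff]
      apply Subgroup.mem_sup_left
      rw [Subgroup.mem_iInf]
      intro φ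
      rw [MonoidHom.mem_ker, map_pow]
      have h2 : (⟨φ g, hB φ g⟩ : ↥B) ^ m = 1 := pow_card_eq_one'
      simpa using congrArg Subtype.val h2
    set e := Monoid.exponent (G ⧸ K) with he
    have he0 : 0 < e := Monoid.ExponentExists.exponent_pos (Monoid.ExponentExists.of_finite)
    haveI : HasEnoughRootsOfUnity ↥B e := by
      constructor
      · obtain ⟨g, hg⟩ := IsCyclic.exists_ofOrder_eq_natCard (α := ↥B)
        refine ⟨g ^ (m / e), ?_⟩
        have h1 : m / e ∣ m := Nat.div_dvd_of_dvd hexp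
        have horder : orderOf (g ^ (m / e)) = e := by
          rw [orderOf_pow, hg, ← hm, Nat.gcd_eq_right h1, Nat.div_div_self hexp hm0.ne']
        have hprim := IsPrimitiveRoot.orderOf (g ^ (m / e))
        rwa [horder] at hprim
      · haveI : IsCyclic (↥B)ˣ := isCyclic_of_surjective (toUnits (G := ↥B)) toUnits.surjective
        exact Subgroup.isCyclic _
    have hne : (QuotientGroup.mk' K) x ≠ 1 := by
      intro h
      exact hxK ((QuotientGroup.eq_one_iff x).mp h)
    obtain ⟨χ, hχ⟩ := CommGroup.exists_apply_ne_one_of_hasEnoughRootsOfUnity (G ⧸ K) ↥B hne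
    set f : G →* A :=
      B.subtype.comp ((Units.coeHom ↥B).comp (χ.comp (QuotientGroup.mk' K))) with hf
    have hNf : N ≤ f.ker := by
      intro n hn
      have h1 : ((n : G) : G ⧸ K) = 1 :=
        (QuotientGroup.eq_one_iff n).mpr (Subgroup.mem_sup_right hn)
      simp [hf, MonoidHom.mem_ker, h1]
    have := hq (QuotientGroup.lift N f hNf)
    rw [MonoidHom.mem_ker] at this
    have hfx : f x = 1 := by
      rwa [show (QuotientGroup.mk' N) x = ((x : G ⧸ N)) from rfl,
        QuotientGroup.lift_mk] at this
    have h1 : ((χ ((QuotientGroup.mk' K) x) : (↥B)ˣ) : ↥B) = (1 : ↥B) := by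
      apply OneMemClass.coe_eq_one.mp
      simpa [hf] using hfx
    exact hχ (Units.val_eq_one.mp h1)
  · -- easy direction
    rintro q hqm
    rw [Subgroup.mem_map] at hqm
    obtain ⟨x, hx, rfl⟩ := hqm
    refine Subgroup.mem_iInf.mpr fun ψ => ?_
    have := Subgroup.mem_iInf.mp hx (ψ.comp (QuotientGroup.mk' N))
    rw [MonoidHom.mem_ker, MonoidHom.comp_apply] at this
    rw [MonoidHom.mem_ker]
    exact this
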